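/- Let E : [0, T₀/ε] → [0, ∞) be differentiable and satisfy E'(t) ≤ Cε(E(t) + ε^{1/2}E(t)^{3/2} + 1) with E(0) ≤ E₀. Then there exist ε₀ > 0 and M > 0 (depending only on C, T₀, E₀) such that for all ε ∈ (0, ε₀), E(t) ≤ M for all t ∈ [0, T₀/ε]. -/

import Mathlib

open Set

/-- Linear Gronwall: if `E' ≤ K (E + 2)` on `[0,b]` then `E s + 2 ≤ (E 0 + 2) e^{K s}`. -/
lemma gronwall_linear (K b : ℝ) (hb : 0 ≤ b) (E E' : ℝ → ℝ)
    (hderiv : ∀ t ∈ Icc (0:ℝ) b, HasDerivAt E (E' t) t)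
    (hineq : ∀ t ∈ Icc (0:ℝ) b, E' t ≤ K * (E t + 2)) :
    ∀ s ∈ Icc (0:ℝ) b, E s + 2 ≤ (E 0 + 2) * Real.exp (K * s) := by
  set g : ℝ → ℝ := fun t => (E t + 2) * Real.exp (-(K * t)) with hg
  have hgd : ∀ t ∈ Icc (0:ℝ) b,
      HasDerivAt g ((E' t - K * (E t + 2)) * Real.exp (-(K * t))) t := by
    intro t ht
    have h1 : HasDerivAt (fun t => E t + 2) (E' t) t := (hderiv t ht).add_const 2
    have h2 : HasDerivAt (fun t : ℝ => Real.exp (-(K * t)))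
        (Real.exp (-(K * t)) * (-K)) t := by
      have him : HasDerivAt (fun t : ℝ => -(K * t)) (-K) t := by
        exact (((hasDerivAt_id t).const_mul K).neg).congr_deriv (by simp)
      exact (Real.hasDerivAt_exp (-(K * t))).comp t him
    have := h1.mul h2
    have e : (E' t - K * (E t + 2)) * Real.exp (-(K * t)) = E' t * Real.exp (-(K * t)) + (E t + 2) * (Real.exp (-(K * t)) * -K) := by ring
    rw [e]; exact this
  have hanti : AntitoneOn g (Icc 0 b) := by
    refine antitoneOn_of_deriv_nonpos (convex_Icc 0 b) ?_ ?_ ?_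
    · exact fun x hx => ((hgd x hx).continuousAt).continuousWithinAt
    · intro x hx
      rw [interior_Icc] at hx
      exact ((hgd x (Ioo_subset_Icc_self hx)).differentiableAt.differentiableWithinAt)
    · intro x hx
      rw [interior_Icc] at hx
      have hx' : x ∈ Icc (0:ℝ) b := Ioo_subset_Icc_self hx
      rw [(hgd x hx').deriv]
      have h := hineq x hx'
      have : E' x - K * (E x + 2) ≤ 0 := by linarith
      exact mul_nonpos_of_nonpos_of_nonneg this (Real.exp_pos _).le
  intro s hs
  have h0 : (0:ℝ) ∈ Icc (0:ℝ) b := ⟨le_refl 0, hb⟩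
  have := hanti h0 hs hs.1
  have hg0 : g 0 = E 0 + 2 := by simp [hg]
  rw [hg0] at this
  have hepos : (0:ℝ) < Real.exp (-(K * s)) := Real.exp_pos _
  calc E s + 2 = g s * Real.exp (K * s) := by
        rw [hg]; simp only []; rw [mul_assoc, ← Real.exp_add]; simp
    _ ≤ (E 0 + 2) * Real.exp (K * s) :=
        mul_le_mul_of_nonneg_right this (Real.exp_pos _).le

/-- Gronwall-type bound: if `E' ≤ Cε(E + ε^{1/2}E^{3/2} + 1)` on `[0, T₀/ε]` and
`E(0) ≤ E₀`, then `E` stays `O(1)`-bounded on `[0, T₀/ε]` for all small `ε`. -/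
theorem energy_gronwall (C T₀ E₀ : ℝ) (hC : 0 < C) (hT₀ : 0 < T₀) (hE₀ : 0 < E₀) :
    ∃ ε₀ > (0 : ℝ), ∃ M > (0 : ℝ), ∀ ε ∈ Ioo (0 : ℝ) ε₀, ∀ E E' : ℝ → ℝ,
      (∀ t ∈ Icc (0 : ℝ) (T₀ / ε), 0 ≤ E t) →
      (∀ t ∈ Icc (0 : ℝ) (T₀ / ε), HasDerivAt E (E' t) t) →
      (∀ t ∈ Icc (0 : ℝ) (T₀ / ε),
        E' t ≤ C * ε * (E t + ε ^ ((1 : ℝ) / 2) * (E t) ^ ((3 : ℝ) / 2) + 1)) →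
      E 0 ≤ E₀ →
      ∀ t ∈ Icc (0 : ℝ) (T₀ / ε), E t ≤ M := by
  set M : ℝ := (E₀ + 2) * Real.exp (C * T₀) with hM
  have hE2 : (0:ℝ) < E₀ + 2 := by linarith
  have hexp1 : (1:ℝ) ≤ Real.exp (C * T₀) :=
    Real.one_le_exp (by positivity)
  have hMgeE : E₀ + 2 ≤ M := le_mul_of_one_le_right hE2.le hexp1
  have hMpos : (0:ℝ) < M := by positivity
  have hM2 : (2:ℝ) ≤ M := by linarith
  refine ⟨min 1 (M ^ (-(3:ℝ))), by positivity, M, hMpos, ?_⟩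
  rintro ε ⟨hε0, hεlt⟩ E E' hEnn hEd hEineq hE0
  set T : ℝ := T₀ / ε with hT
  have hTpos : 0 < T := div_pos hT₀ hε0
  -- the small-epsilon estimate: if 0 ≤ E t ≤ M then ε^{1/2} E^{3/2} ≤ 1
  have hsmall : ∀ x : ℝ, 0 ≤ x → x ≤ M → ε ^ ((1:ℝ)/2) * x ^ ((3:ℝ)/2) ≤ 1 := by
    intro x hx hxM
    have h1 : ε ^ ((1:ℝ)/2) ≤ (M ^ (-(3:ℝ))) ^ ((1:ℝ)/2) :=
      Real.rpow_le_rpow hε0.le (le_of_lt (lt_of_lt_of_le hεlt (min_le_right _ _))) (by norm_num)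
    have h2 : (M ^ (-(3:ℝ))) ^ ((1:ℝ)/2) = M ^ (-(3:ℝ)/2) := by
      rw [← Real.rpow_mul hMpos.le]
      norm_num
    have h3 : x ^ ((3:ℝ)/2) ≤ M ^ ((3:ℝ)/2) :=
      Real.rpow_le_rpow hx hxM (by norm_num)
    calc ε ^ ((1:ℝ)/2) * x ^ ((3:ℝ)/2)
        ≤ M ^ (-(3:ℝ)/2) * M ^ ((3:ℝ)/2) := by
          apply mul_le_mul (h2 ▸ h1) h3 (Real.rpow_nonneg hx _) (Real.rpow_nonneg hMpos.le _)
      _ = 1 := by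
          rw [← Real.rpow_add hMpos]; norm_num
  -- key consequence: wherever 0 ≤ E ≤ M on [0,b] ⊆ [0,T], we get E ≤ M - 2 on [0,b]
  have key : ∀ b ∈ Icc (0:ℝ) T, (∀ s ∈ Icc (0:ℝ) b, E s ≤ M) →
      ∀ s ∈ Icc (0:ℝ) b, E s ≤ M - 2 := by
    intro b hbT hbd
    have hsub : Icc (0:ℝ) b ⊆ Icc (0:ℝ) T := Icc_subset_Icc le_rfl hbT.2
    have hlin := gronwall_linear (C * ε) b hbT.1 E E'
      (fun t ht => hEd t (hsub ht))
      (fun t ht => by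
        have h1 := hEineq t (hsub ht)
        have h2 := hsmall (E t) (hEnn t (hsub ht)) (hbd t ht)
        have hCε : 0 ≤ C * ε := by positivity
        nlinarith [hCε, h1, h2])
    intro s hs
    have := hlin s hs
    have hss : C * ε * s ≤ C * T₀ := by
      have : ε * s ≤ T₀ := by
        have := hs.2.trans hbT.2
        calc ε * s ≤ ε * T := by nlinarith
          _ = T₀ := by rw [hT]; field_simp
      nlinarith
    have hexple : Real.exp (C * ε * s) ≤ Real.exp (C * T₀) := Real.exp_le_exp.2 hss
    have hEe : E 0 + 2 ≤ E₀ + 2 := by linarith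
    have : E s + 2 ≤ (E₀ + 2) * Real.exp (C * T₀) := by
      calc E s + 2 ≤ (E 0 + 2) * Real.exp (C * ε * s) := this
        _ ≤ (E₀ + 2) * Real.exp (C * T₀) := by
            apply mul_le_mul hEe hexple (Real.exp_pos _).le hE2.le
    linarith [this]
  -- bootstrap
  set B : Set ℝ := {t ∈ Icc (0:ℝ) T | ∀ s ∈ Icc (0:ℝ) t, E s ≤ M - 1} with hB
  have h0B : (0:ℝ) ∈ B := by
    refine ⟨⟨le_refl 0, hTpos.le⟩, ?_⟩
    intro s hs
    have : s = 0 := le_antisymm hs.2 hs.1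
    rw [this]; linarith
  have hBne : B.Nonempty := ⟨0, h0B⟩
  have hBbdd : BddAbove B := ⟨T, fun x hx => hx.1.2⟩
  set b : ℝ := sSup B with hb
  have hbmem : b ∈ Icc (0:ℝ) T :=
    ⟨le_csSup hBbdd h0B, csSup_le hBne (fun x hx => hx.1.2)⟩
  -- E ≤ M - 1 on [0, b)
  have hlt : ∀ s ∈ Ico (0:ℝ) b, E s ≤ M - 1 := by
    intro s hs
    obtain ⟨t, htB, hst⟩ := exists_lt_of_lt_csSup hBne hs.2
    exact htB.2 s ⟨hs.1, hst.le⟩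
  -- E b ≤ M - 1 by continuity
  have hEb : E b ≤ M - 1 := by
    rcases eq_or_lt_of_le hbmem.1 with h | h
    · rw [← h]; linarith [h0B.2 0 ⟨le_refl 0, le_refl 0⟩]
    · have hcont : Filter.Tendsto E (nhdsWithin b (Iio b)) (nhds (E b)) :=
        ((hEd b hbmem).continuousAt.continuousWithinAt).tendsto
      refine le_of_tendsto hcont ?_
      filter_upwards [Ioo_mem_nhdsLT_of_mem (⟨h, le_refl b⟩ : b ∈ Ioc 0 b)] with s hs
      exact hlt s ⟨hs.1.le, hs.2⟩
  have hgood : ∀ s ∈ Icc (0:ℝ) b, E s ≤ M - 1 := by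
    intro s hs
    rcases lt_or_eq_of_le hs.2 with h | h
    · exact hlt s ⟨hs.1, h⟩
    · rw [h]; exact hEb
  -- improve to M - 2 on [0, b]
  have hgood2 : ∀ s ∈ Icc (0:ℝ) b, E s ≤ M - 2 :=
    key b hbmem (fun s hs => by linarith [hgood s hs])
  -- b must equal T
  have hbT : b = T := by
    by_contra hne
    have hblt : b < T := lt_of_le_of_ne hbmem.2 hne
    have hEb2 : E b < M - 1 := by linarith [hgood2 b ⟨hbmem.1, le_refl b⟩]
    have hcont : ContinuousAt E b := (hEd b hbmem).continuousAt
    have hev : ∀ᶠ s in nhds b, E s < M - 1 :=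
      hcont.eventually_lt_const hEb2
    obtain ⟨δ, hδ, hball⟩ := Metric.eventually_nhds_iff.mp hev
    set b' : ℝ := min (b + δ/2) T with hb'
    have hbb' : b < b' := lt_min (by linarith) hblt
    have hb'B : b' ∈ B := by
      refine ⟨⟨by linarith [hbmem.1], min_le_right _ _⟩, ?_⟩
      intro s hs
      rcases le_or_gt s b with h | h
      · linarith [hgood s ⟨hs.1, h⟩]
      · have : dist s b < δ := by
          rw [Real.dist_eq, abs_of_pos (by linarith)]
          have : s ≤ b + δ/2 := hs.2.trans (min_le_left _ _)
          linarith
        linarith [hball this]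
    exact absurd (le_csSup hBbdd hb'B) (not_le.mpr hbb')
  intro t ht
  rw [← hbT] at ht
  linarith [hgood t ht]
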